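/- Let G be an even-hole-free graph and let (A1, C1, B1, A2, C2, B2) be a 2-join of G. Let P be a flat path of G. If P meets both A1 and A2, then V(P) ∩ (A1 ∪ A2) consists of the two endpoints of an edge of P. Similarly, if P meets both B1 and B2, then V(P) ∩ (B1 ∪ B2) consists of the two endpoints of an edge of P. -/

import Mathlib

open Classical

universe u

/-- `IsHoleOn G n H`: `H` is the vertex set of an induced cycle of `G` of length `n ≥ 4`. -/
def IsHoleOn {V : Type u} (G : SimpleGraph V) (n : ℕ) (H : Set V) : Prop :=
  4 ≤ n ∧ ∃ f : ZMod n → V, Function.Injective f ∧ Set.range f = H ∧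
    ∀ i j : ZMod n, G.Adj (f i) (f j) ↔ (j = i + 1 ∨ i = j + 1)

/-- A hole: an induced cycle of length at least 4. -/
def IsHole {V : Type u} (G : SimpleGraph V) (H : Set V) : Prop :=
  ∃ n : ℕ, IsHoleOn G n H

/-- No induced cycle of even length. -/
def EvenHoleFree {V : Type u} (G : SimpleGraph V) : Prop :=
  ∀ (n : ℕ) (H : Set V), IsHoleOn G n H → ¬ Even n

/-- `G[X]` is chordal: no hole of `G` is contained in `X`. -/
def ChordalSet {V : Type u} (G : SimpleGraph V) (X : Set V) : Prop :=
  ∀ H : Set V, H ⊆ X → ¬ IsHole G H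

/-- A wheel `(H, w)`: a hole `H` and `w ∉ H` with at least 3 neighbors in `H`. -/
def IsWheel {V : Type u} (G : SimpleGraph V) (H : Set V) (w : V) : Prop :=
  IsHole G H ∧ w ∉ H ∧ 3 ≤ (H ∩ {u | G.Adj w u}).ncard

/-- An induced path of `G`, recorded as the list of its vertices in order. -/
def IsInducedPathList {V : Type u} (G : SimpleGraph V) (l : List V) : Prop :=
  l ≠ [] ∧ l.Nodup ∧
    ∀ (i j : ℕ) (hi : i < l.length) (hj : j < l.length),
      G.Adj (l.get ⟨i, hi⟩) (l.get ⟨j, hj⟩) ↔ (i + 1 = j ∨ j + 1 = i)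

/-- A vertex set that induces a path. -/
def InducesPath {V : Type u} (G : SimpleGraph V) (S : Set V) : Prop :=
  ∃ l : List V, IsInducedPathList G l ∧ {v | v ∈ l} = S

/-- A sector wheel: a wheel `(H, w)` where `w` is complete to `H` or
`N(w) ∩ H` induces a path. -/
def IsSectorWheel {V : Type u} (G : SimpleGraph V) (H : Set V) (w : V) : Prop :=
  IsWheel G H w ∧
    ((∀ u ∈ H, G.Adj w u) ∨ InducesPath G (H ∩ {u | G.Adj w u}))

/-- A twin wheel: a wheel `(H, w)` where `N(w) ∩ H` induces a three-vertex path. -/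
def IsTwinWheel {V : Type u} (G : SimpleGraph V) (H : Set V) (w : V) : Prop :=
  IsWheel G H w ∧ ∃ a b c : V, a ≠ b ∧ b ≠ c ∧ a ≠ c ∧
    H ∩ {u | G.Adj w u} = {a, b, c} ∧ G.Adj a b ∧ G.Adj b c ∧ ¬ G.Adj a c

/-- A short pyramid: a wheel `(H, w)` where `N(w) ∩ H` is an edge plus an isolated vertex. -/
def IsShortPyramid {V : Type u} (G : SimpleGraph V) (H : Set V) (w : V) : Prop :=
  IsWheel G H w ∧ ∃ a b c : V, a ≠ b ∧ b ≠ c ∧ a ≠ c ∧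
    H ∩ {u | G.Adj w u} = {a, b, c} ∧ G.Adj a b ∧ ¬ G.Adj a c ∧ ¬ G.Adj b c

/-- A flat path: an induced path all of whose interior vertices have degree 2 in `G`. -/
def IsFlatPath {V : Type u} (G : SimpleGraph V) (l : List V) : Prop :=
  IsInducedPathList G l ∧
    ∀ (i : ℕ) (hi : i < l.length), 0 < i → i + 1 < l.length →
      ({u | G.Adj (l.get ⟨i, hi⟩) u}).ncard = 2

/-- The closed neighborhood `N[S]` of a set of vertices. -/
def ClosedNbhd {V : Type u} (G : SimpleGraph V) (S : Set V) : Set V :=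
  S ∪ {v | ∃ s ∈ S, G.Adj v s}

/-- `(W1, W2)` (a precover on a path with vertex set `S`) extends to a chordal cover of `G`. -/
def ExtendsToCover {V : Type u} (G : SimpleGraph V) (S W1 W2 : Set V) : Prop :=
  ∃ X1 X2 : Set V, W1 ⊆ X1 ∧ W2 ⊆ X2 ∧ ChordalSet G X1 ∧ ChordalSet G X2 ∧
    X1 ∩ X2 = S ∧ X1 ∪ X2 = Set.univ

/-- Flat path extendable. -/
def FPE {V : Type u} (G : SimpleGraph V) : Prop :=
  ∀ l : List V, IsFlatPath G l →
    ∀ W1 W2 : Set V, ChordalSet G W1 → ChordalSet G W2 →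
      W1 ∩ W2 = {v | v ∈ l} → W1 ∪ W2 = ClosedNbhd G {v | v ∈ l} →
      ExtendsToCover G {v | v ∈ l} W1 W2

/-- Weakly flat path extendable: only paths with at most two vertices are considered. -/
def WeaklyFPE {V : Type u} (G : SimpleGraph V) : Prop :=
  ∀ l : List V, IsInducedPathList G l → l.length ≤ 2 →
    ∀ W1 W2 : Set V, ChordalSet G W1 → ChordalSet G W2 →
      W1 ∩ W2 = {v | v ∈ l} → W1 ∪ W2 = ClosedNbhd G {v | v ∈ l} →
      ExtendsToCover G {v | v ∈ l} W1 W2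

/-- Minimal non flat path extendable. -/
def MNFPE {V : Type u} (G : SimpleGraph V) : Prop :=
  ¬ FPE G ∧ ∀ S : Set V, S ≠ Set.univ → FPE (G.induce S)

/-- Minimal non-weakly flat path extendable. -/
def MinNonWeaklyFPE {V : Type u} (G : SimpleGraph V) : Prop :=
  ¬ WeaklyFPE G ∧ ∀ S : Set V, S ≠ Set.univ → WeaklyFPE (G.induce S)

/-- A witness path `l` with witness sets `W1, W2`: a precover on a flat path
admitting no extension to a chordal cover. -/
def WitnessPath {V : Type u} (G : SimpleGraph V) (l : List V) (W1 W2 : Set V) : Prop :=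
  IsFlatPath G l ∧ ChordalSet G W1 ∧ ChordalSet G W2 ∧
    W1 ∩ W2 = {v | v ∈ l} ∧ W1 ∪ W2 = ClosedNbhd G {v | v ∈ l} ∧
    ¬ ExtendsToCover G {v | v ∈ l} W1 W2

/-- A witness path of length zero or one with witness sets, for the weak notion. -/
def WeakWitness {V : Type u} (G : SimpleGraph V) (l : List V) (W1 W2 : Set V) : Prop :=
  IsInducedPathList G l ∧ l.length ≤ 2 ∧ ChordalSet G W1 ∧ ChordalSet G W2 ∧
    W1 ∩ W2 = {v | v ∈ l} ∧ W1 ∪ W2 = ClosedNbhd G {v | v ∈ l} ∧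
    ¬ ExtendsToCover G {v | v ∈ l} W1 W2

/-- `N(v)` is the union of a clique and a singleton. -/
def NearlySimplicial {V : Type u} (G : SimpleGraph V) (v : V) : Prop :=
  ∃ (K : Set V) (u : V), G.IsClique K ∧ {w | G.Adj v w} = K ∪ {u}

/-- `G` has a star cutset. -/
def HasStarCutset {V : Type u} (G : SimpleGraph V) : Prop :=
  G.Connected ∧ ∃ (v : V) (C : Set V), v ∈ C ∧ C ⊆ insert v {u | G.Adj v u} ∧
    ¬ (G.induce (Cᶜ : Set V)).Connected

/-- `v` is the center of a star cutset of `G`. -/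
def IsStarCutsetCenter {V : Type u} (G : SimpleGraph V) (v : V) : Prop :=
  G.Connected ∧ ∃ C : Set V, v ∈ C ∧ C ⊆ insert v {u | G.Adj v u} ∧
    ¬ (G.induce (Cᶜ : Set V)).Connected

/-- `G` has a full star cutset, i.e. a star cutset of the form `N[v]`. -/
def HasFullStarCutset {V : Type u} (G : SimpleGraph V) : Prop :=
  G.Connected ∧ ∃ v : V,
    ¬ (G.induce (((insert v {u | G.Adj v u}) : Set V)ᶜ)).Connected

/-- A clique cutset. -/
def IsCliqueCutset {V : Type u} (G : SimpleGraph V) (Q : Set V) : Prop :=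
  G.IsClique Q ∧ ¬ (G.induce (Qᶜ : Set V)).Connected

/-- `C` is (the vertex set of) a connected component of `G[S]`. -/
def IsCompOf {V : Type u} (G : SimpleGraph V) (S C : Set V) : Prop :=
  ∃ comp : (G.induce S).ConnectedComponent, C = Subtype.val '' comp.supp

/-- A marker path for the side `(A, C, B)` of a 2-join, with ends `a ∈ A` and `b ∈ B`
and interior in `C`. -/
def IsMarkerPath {V : Type u} (G : SimpleGraph V) (A C B : Set V) (a b : V)
    (l : List V) : Prop :=
  IsInducedPathList G l ∧ a ∈ A ∧ b ∈ B ∧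
    ∃ m : List V, l = a :: (m ++ [b]) ∧ ∀ v ∈ m, v ∈ C

/-- A 2-join of `G`. -/
def IsTwoJoin {V : Type u} (G : SimpleGraph V) (A1 C1 B1 A2 C2 B2 : Set V) : Prop :=
  ([A1, C1, B1, A2, C2, B2] : List (Set V)).Pairwise Disjoint ∧
  A1 ∪ C1 ∪ B1 ∪ A2 ∪ C2 ∪ B2 = Set.univ ∧
  (∀ a ∈ A1, ∀ b ∈ A2, G.Adj a b) ∧
  (∀ a ∈ B1, ∀ b ∈ B2, G.Adj a b) ∧
  (∀ u ∈ A1 ∪ C1 ∪ B1, ∀ v ∈ A2 ∪ C2 ∪ B2, G.Adj u v →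
    ((u ∈ A1 ∧ v ∈ A2) ∨ (u ∈ B1 ∧ v ∈ B2))) ∧
  (∃ (a b : V) (l : List V), IsMarkerPath G A1 C1 B1 a b l ∧
      A1 ∪ C1 ∪ B1 ≠ {v | v ∈ l}) ∧
  (∃ (a b : V) (l : List V), IsMarkerPath G A2 C2 B2 a b l ∧
      A2 ∪ C2 ∪ B2 ≠ {v | v ∈ l})

/-- A leaf of a graph: a vertex of degree one. -/
def IsLeaf {V : Type u} (T : SimpleGraph V) (v : V) : Prop :=
  ({u | T.Adj v u}).ncard = 1

/-- The graph `B(T)` built from a tree `T` whose bipartition is given by the proper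
2-coloring `c`: vertices are the edges of `T` plus two extra vertices `x_false, x_true`
(encoded as `Bool`); two edges are adjacent iff they share an endpoint, `x_i` is adjacent
to the pendant edge at each leaf on side `i`, and `x_false` is adjacent to `x_true`. -/
def BGraph {V : Type u} (T : SimpleGraph V) (c : V → Bool) :
    SimpleGraph (↥T.edgeSet ⊕ Bool) :=
  SimpleGraph.fromRel fun a b =>
    match a, b with
    | Sum.inl e, Sum.inl f => ∃ v : V, v ∈ e.val ∧ v ∈ f.val
    | Sum.inl e, Sum.inr i => ∃ v : V, IsLeaf T v ∧ c v = i ∧ v ∈ e.val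
    | Sum.inr _, Sum.inl _ => False
    | Sum.inr _, Sum.inr _ => True

section Aux

variable {V : Type u}

private lemma myAdjConsec (G : SimpleGraph V) {l : List V}
    (h : IsInducedPathList G l) (pre post : List V) (x y : V)
    (hl : l = pre ++ x :: y :: post) : G.Adj x y := by
  obtain ⟨_, _, hadj⟩ := h
  have hlen : l.length = pre.length + (post.length + 2) := by simp [hl]
  have hi : pre.length < l.length := by omega
  have hj : pre.length + 1 < l.length := by omega
  have hx : l.get ⟨pre.length, hi⟩ = x := by
    simp [hl, List.getElem_append_right]
  have hy : l.get ⟨pre.length + 1, hj⟩ = y := by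
    simp [hl, List.getElem_append_right]
  have := (hadj pre.length (pre.length + 1) hi hj).mpr (Or.inl rfl)
  rwa [hx, hy] at this

private lemma myFourHole (G : SimpleGraph V) (a b c d : V)
    (e1 : G.Adj a b) (e2 : G.Adj a d) (e3 : G.Adj b c) (e4 : G.Adj d c)
    (n1 : ¬ G.Adj b d) (n2 : ¬ G.Adj a c)
    (hab : a ≠ b) (hac : a ≠ c) (had : a ≠ d) (hbc : b ≠ c) (hbd : b ≠ d) (hcd : c ≠ d) :
    IsHoleOn G 4 {a, b, c, d} := by
  have hcases : ∀ i : ZMod 4, i = 0 ∨ i = 1 ∨ i = 2 ∨ i = 3 := by decide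
  have d10 : ¬ (1:ZMod 4) = 0 := by decide
  have d20 : ¬ (2:ZMod 4) = 0 := by decide
  have d21 : ¬ (2:ZMod 4) = 1 := by decide
  have d30 : ¬ (3:ZMod 4) = 0 := by decide
  have d31 : ¬ (3:ZMod 4) = 1 := by decide
  have d32 : ¬ (3:ZMod 4) = 2 := by decide
  set f : ZMod 4 → V := fun i => if i = 0 then a else if i = 1 then b else if i = 2 then c else d with hf
  have f0 : f 0 = a := by simp [hf]
  have f1 : f 1 = b := by simp [hf, d10]
  have f2 : f 2 = c := by simp [hf, d20, d21]
  have f3 : f 3 = d := by simp [hf, d30, d31, d32]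
  have n1' : ¬ G.Adj d b := fun h => n1 h.symm
  have n2' : ¬ G.Adj c a := fun h => n2 h.symm
  refine ⟨le_refl 4, f, ?_, ?_, ?_⟩
  · intro i j hij
    rcases hcases i with rfl|rfl|rfl|rfl <;> rcases hcases j with rfl|rfl|rfl|rfl <;>
      simp only [f0, f1, f2, f3] at hij <;>
      first
        | rfl
        | (exact absurd hij (by assumption))
        | (exact absurd hij.symm (by assumption))
  · ext u
    simp only [Set.mem_range, Set.mem_insert_iff, Set.mem_singleton_iff]
    constructor
    · rintro ⟨i, rfl⟩
      rcases hcases i with rfl|rfl|rfl|rfl <;> simp [f0, f1, f2, f3]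
    · rintro (rfl|rfl|rfl|rfl)
      exacts [⟨0, f0⟩, ⟨1, f1⟩, ⟨2, f2⟩, ⟨3, f3⟩]
  · intro i j
    rcases hcases i with rfl|rfl|rfl|rfl <;> rcases hcases j with rfl|rfl|rfl|rfl <;>
      simp only [f0, f1, f2, f3] <;>
      first
        | (exact iff_of_true (by first | exact e1 | exact e2 | exact e3 | exact e4 | exact e1.symm | exact e2.symm | exact e3.symm | exact e4.symm) (by decide))
        | (exact iff_of_false (by first | exact G.irrefl | exact n1 | exact n2 | exact n1' | exact n2') (by decide))

private lemma myNoThird [Finite V] {G : SimpleGraph V} (hEH : EvenHoleFree G)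
    {X1 X2 : Set V} (hdisj : Disjoint X1 X2)
    (hcomp : ∀ x ∈ X1, ∀ y ∈ X2, G.Adj x y)
    (hw : ∀ y ∈ X2, {u | G.Adj y u} ⊆ X1 → ∃ x ∈ X2, x ≠ y ∧ ¬ G.Adj y x)
    {l : List V} (hl : IsFlatPath G l)
    {a1 a2 v : V} (ha1l : a1 ∈ l) (ha1 : a1 ∈ X1)
    (ha2l : a2 ∈ l) (ha2 : a2 ∈ X2) (hvl : v ∈ l) (hv : v ∈ X1) : v = a1 := by
  by_contra hne
  obtain ⟨⟨-, hnd, hadj⟩, hflat⟩ := hl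
  obtain ⟨⟨p, hp⟩, hgp⟩ := List.mem_iff_get.mp ha1l
  obtain ⟨⟨q, hq⟩, hgq⟩ := List.mem_iff_get.mp ha2l
  obtain ⟨⟨r, hr⟩, hgr⟩ := List.mem_iff_get.mp hvl
  have hd := Set.disjoint_left.mp hdisj
  have hpr : p ≠ r := by
    intro h
    apply hne
    rw [← hgr, ← hgp]
    congr 1
    exact Fin.ext h.symm
  have h1 : p + 1 = q ∨ q + 1 = p :=
    (hadj p q hp hq).mp (by rw [hgp, hgq]; exact hcomp a1 ha1 a2 ha2)
  have h2 : r + 1 = q ∨ q + 1 = r :=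
    (hadj r q hr hq).mp (by rw [hgr, hgq]; exact hcomp v hv a2 ha2)
  have hkey : 0 < q ∧ q + 1 < l.length ∧ (r = p + 2 ∨ p = r + 2) := by
    rcases h1 with h1 | h1 <;> rcases h2 with h2 | h2 <;> omega
  obtain ⟨hq0, hq1, hdist⟩ := hkey
  have hdeg : ({u | G.Adj a2 u}).ncard = 2 := by
    have := hflat q hq hq0 hq1; rwa [hgq] at this
  have ha1v : a1 ≠ v := fun h => hne h.symm
  have hNsub : {u | G.Adj a2 u} ⊆ X1 := by
    have hsub : ({a1, v} : Set V) ⊆ {u | G.Adj a2 u} := by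
      rintro u (rfl | rfl)
      · exact (hcomp _ ha1 _ ha2).symm
      · exact (hcomp _ hv _ ha2).symm
    have heq : ({a1, v} : Set V) = {u | G.Adj a2 u} :=
      Set.eq_of_subset_of_ncard_le hsub (by rw [hdeg, Set.ncard_pair ha1v])
    rw [← heq]
    rintro u (rfl | rfl) <;> assumption
  obtain ⟨x, hxX2, hxne, hxnadj⟩ := hw a2 ha2 hNsub
  have n1 : ¬ G.Adj a1 v := by
    intro h
    have := (hadj p r hp hr).mp (by rw [hgp, hgr]; exact h)
    omega
  have ne1 : a2 ≠ a1 := by intro h; subst h; exact hd ha1 ha2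
  have ne2 : a2 ≠ x := fun h => hxne h.symm
  have ne3 : a2 ≠ v := by intro h; subst h; exact hd hv ha2
  have ne4 : a1 ≠ x := by intro h; subst h; exact hd ha1 hxX2
  have ne6 : x ≠ v := by intro h; subst h; exact hd hv hxX2
  exact hEH 4 {a2, a1, x, v}
    (myFourHole G a2 a1 x v ((hcomp a1 ha1 a2 ha2).symm) ((hcomp v hv a2 ha2).symm)
      (hcomp a1 ha1 x hxX2) (hcomp v hv x hxX2) n1 hxnadj ne1 ne2 ne3 ne4 ha1v ne6)
    (by decide)

private lemma myWitFront {G : SimpleGraph V} {A C B X : Set V}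
    (hdC : Disjoint X C) (hdB : Disjoint X B) (hdA : Disjoint X A)
    {a b : V} {lm : List V} (hm : IsMarkerPath G A C B a b lm) :
    ∀ y ∈ A, {u | G.Adj y u} ⊆ X → ∃ x ∈ A, x ≠ y ∧ ¬ G.Adj y x := by
  intro y hy hN
  obtain ⟨hip, haA, hbB, m, hleq, hmC⟩ := hm
  have hnadj : ¬ G.Adj y a := fun h => Set.disjoint_left.mp hdA (hN h) haA
  refine ⟨a, haA, ?_, hnadj⟩
  intro hay
  subst hay
  rcases m with _ | ⟨c, m'⟩
  · have hab : G.Adj a b := myAdjConsec G hip [] [] a b (by simpa using hleq)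
    exact Set.disjoint_left.mp hdB (hN hab) hbB
  · have hac : G.Adj a c := myAdjConsec G hip [] (m' ++ [b]) a c (by simpa using hleq)
    exact Set.disjoint_left.mp hdC (hN hac) (hmC c (by simp))

private lemma myWitBack {G : SimpleGraph V} {A C B X : Set V}
    (hdA : Disjoint X A) (hdC : Disjoint X C) (hdB : Disjoint X B)
    {a b : V} {lm : List V} (hm : IsMarkerPath G A C B a b lm) :
    ∀ y ∈ B, {u | G.Adj y u} ⊆ X → ∃ x ∈ B, x ≠ y ∧ ¬ G.Adj y x := by
  intro y hy hN
  obtain ⟨hip, haA, hbB, m, hleq, hmC⟩ := hm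
  have hnadj : ¬ G.Adj y b := fun h => Set.disjoint_left.mp hdB (hN h) hbB
  refine ⟨b, hbB, ?_, hnadj⟩
  intro hby
  subst hby
  rcases m.eq_nil_or_concat with rfl | ⟨m', c, rfl⟩
  · have hab : G.Adj a b := myAdjConsec G hip [] [] a b (by simpa using hleq)
    exact Set.disjoint_left.mp hdA (hN hab.symm) haA
  · have hcb : G.Adj c b := myAdjConsec G hip (a :: m') [] c b (by rw [hleq]; simp)
    exact Set.disjoint_left.mp hdC (hN hcb.symm) (hmC c (by simp))

private lemma myCore [Finite V] {G : SimpleGraph V} (hEH : EvenHoleFree G)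
    {X1 X2 : Set V} (hdisj : Disjoint X1 X2)
    (hcomp : ∀ x ∈ X1, ∀ y ∈ X2, G.Adj x y)
    (hw1 : ∀ y ∈ X2, {u | G.Adj y u} ⊆ X1 → ∃ x ∈ X2, x ≠ y ∧ ¬ G.Adj y x)
    (hw2 : ∀ y ∈ X1, {u | G.Adj y u} ⊆ X2 → ∃ x ∈ X1, x ≠ y ∧ ¬ G.Adj y x)
    {l : List V} (hl : IsFlatPath G l)
    (h1 : ({v | v ∈ l} ∩ X1).Nonempty) (h2 : ({v | v ∈ l} ∩ X2).Nonempty) :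
    ∃ (i : ℕ) (h : i + 1 < l.length),
      {v | v ∈ l} ∩ (X1 ∪ X2) = {l.get ⟨i, Nat.lt_of_succ_lt h⟩, l.get ⟨i + 1, h⟩} := by
  obtain ⟨a1, ha1l, ha1⟩ := h1
  obtain ⟨a2, ha2l, ha2⟩ := h2
  have hseteq : {v | v ∈ l} ∩ (X1 ∪ X2) = {a1, a2} := by
    ext u
    constructor
    · rintro ⟨hul, hu | hu⟩
      · exact Or.inl (myNoThird hEH hdisj hcomp hw1 hl ha1l ha1 ha2l ha2 hul hu)
      · exact Or.inr (myNoThird hEH hdisj.symm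
          (fun x hx y hy => (hcomp y hy x hx).symm) hw2 hl ha2l ha2 ha1l ha1 hul hu)
    · rintro (rfl | rfl)
      · exact ⟨ha1l, Or.inl ha1⟩
      · exact ⟨ha2l, Or.inr ha2⟩
  obtain ⟨⟨p, hp⟩, hgp⟩ := List.mem_iff_get.mp ha1l
  obtain ⟨⟨q, hq⟩, hgq⟩ := List.mem_iff_get.mp ha2l
  have hadj12 : G.Adj a1 a2 := hcomp a1 ha1 a2 ha2
  have hpq := (hl.1.2.2 p q hp hq).mp (by rw [hgp, hgq]; exact hadj12)
  rcases hpq with h | h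
  · subst h
    exact ⟨p, hq, by rw [hseteq, ← hgp, ← hgq]⟩
  · subst h
    exact ⟨q, hp, by rw [hseteq, ← hgp, ← hgq, Set.pair_comm]⟩

end Aux

/-- In an even-hole-free graph with a 2-join, a flat path meeting both `A1` and `A2`
meets `A1 ∪ A2` exactly in the two endpoints of one of its edges; similarly for `B1`, `B2`. -/
theorem stmt7 {V : Type u} [Finite V] (G : SimpleGraph V)
    (hEH : EvenHoleFree G)
    (A1 C1 B1 A2 C2 B2 : Set V) (h2j : IsTwoJoin G A1 C1 B1 A2 C2 B2)
    (l : List V) (hl : IsFlatPath G l) :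
    (({v | v ∈ l} ∩ A1).Nonempty → ({v | v ∈ l} ∩ A2).Nonempty →
      ∃ (i : ℕ) (h : i + 1 < l.length),
        {v | v ∈ l} ∩ (A1 ∪ A2) =
          {l.get ⟨i, Nat.lt_of_succ_lt h⟩, l.get ⟨i + 1, h⟩}) ∧
    (({v | v ∈ l} ∩ B1).Nonempty → ({v | v ∈ l} ∩ B2).Nonempty →
      ∃ (i : ℕ) (h : i + 1 < l.length),
        {v | v ∈ l} ∩ (B1 ∪ B2) =
          {l.get ⟨i, Nat.lt_of_succ_lt h⟩, l.get ⟨i + 1, h⟩}) := by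
  obtain ⟨hpw, -, hcA, hcB, -, ⟨ma1, mb1, ml1, hm1, -⟩, ⟨ma2, mb2, ml2, hm2, -⟩⟩ := h2j
  rcases hpw with - | ⟨hA1, hpw⟩
  rcases hpw with - | ⟨hC1, hpw⟩
  rcases hpw with - | ⟨hB1, -⟩
  constructor
  · intro hn1 hn2
    exact myCore hEH (hA1 A2 (by simp)) hcA
      (myWitFront (hA1 C2 (by simp)) (hA1 B2 (by simp)) (hA1 A2 (by simp)) hm2)
      (myWitFront ((hC1 A2 (by simp)).symm) ((hB1 A2 (by simp)).symm)
        ((hA1 A2 (by simp)).symm) hm1)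
      hl hn1 hn2
  · intro hn1 hn2
    exact myCore hEH (hB1 B2 (by simp)) hcB
      (myWitBack (hB1 A2 (by simp)) (hB1 C2 (by simp)) (hB1 B2 (by simp)) hm2)
      (myWitBack ((hA1 B2 (by simp)).symm) ((hC1 B2 (by simp)).symm)
        ((hB1 B2 (by simp)).symm) hm1)
      hl hn1 hn2
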